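/- Let f(z) = Σ_{i=0}^∞ γ_i z^i be a formal power series with complex coefficients, let n, k ≥ 0, and let f_m(z) = Σ_{i=0}^m γ_i z^i denote its partial sums. Suppose P and Q are complex polynomials with deg P ≤ n+k, deg Q ≤ k, Q(0) = 1, and such that the formal power series Q(X)·(Σ_i γ_i X^i) − P(X) has vanishing coefficients in all orders ≤ n+2k (the Padé order condition, so that P/Q is the Padé approximant [n+k/k] of f). Fix z ∈ ℂ with Q(z) ≠ 0, apply Wynn's epsilon algorithm to the input sequence s_m = f_m(z) (m ≥ 0), and assume all differences ε_m^{(i+1)} − ε_m^{(i)} appearing in the computation of ε_{2k}^{(n)} are nonzero. Then ε_{2k}^{(n)} = P(z)/Q(z), i.e., the epsilon algorithm produces the Padé approximant [n+k/k]_f(z). -/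

import Mathlib

/-- Wynn's epsilon algorithm for complex sequences, with the first index shifted by
one: `wynnEpsC s 0 n = ε₋₁⁽ⁿ⁾ = 0`, `wynnEpsC s 1 n = ε₀⁽ⁿ⁾ = sₙ`, and
`wynnEpsC s (k+2) n = ε_{k+1}⁽ⁿ⁾ = ε_{k-1}⁽ⁿ⁺¹⁾ + 1/(ε_k⁽ⁿ⁺¹⁾ - ε_k⁽ⁿ⁾)`. -/
noncomputable def wynnEpsC (s : ℕ → ℂ) : ℕ → ℕ → ℂ
  | 0, _ => 0
  | 1, n => s n
  | (k + 2), n =>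
      wynnEpsC s k (n + 1) + 1 / (wynnEpsC s (k + 1) (n + 1) - wynnEpsC s (k + 1) n)


namespace WynnPade
open Polynomial Finset
open PowerSeries hiding C



/-- the remainder power series of a candidate Padé pair -/
noncomputable def rem (γ : ℕ → ℂ) (p q : Polynomial ℂ) : PowerSeries ℂ :=
  (q : PowerSeries ℂ) * PowerSeries.mk γ - (p : PowerSeries ℂ)

/-- order condition: coefficients of the remainder vanish up to `o` -/
def Ord (γ : ℕ → ℂ) (o : ℕ) (p q : Polynomial ℂ) : Prop :=
  ∀ t, t ≤ o → (PowerSeries.coeff t) (rem γ p q) = 0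

/-- if low coefficients of `R` vanish, so do low coefficients of `R * A` -/
lemma coeff_mul_right_eq_zero (R : PowerSeries ℂ) (A : PowerSeries ℂ) (o t : ℕ)
    (hR : ∀ a, a ≤ o → (PowerSeries.coeff a) R = 0) (ht : t ≤ o) :
    (PowerSeries.coeff t) (R * A) = 0 := by
  rw [PowerSeries.coeff_mul]
  apply Finset.sum_eq_zero
  rintro ⟨a, b⟩ hab
  rw [Finset.HasAntidiagonal.mem_antidiagonal] at hab
  have : a ≤ o := le_trans (by omega) ht
  simp [hR a this]

/-- if low coefficients of `R` vanish, `coeff m (A * R) = A₀ * coeff m R`. -/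
lemma coeff_poly_mul (A : Polynomial ℂ) (R : PowerSeries ℂ) (m : ℕ)
    (h : ∀ t, t < m → (PowerSeries.coeff t) R = 0) :
    (PowerSeries.coeff m) ((A : PowerSeries ℂ) * R) = A.coeff 0 * (PowerSeries.coeff m) R := by
  rw [PowerSeries.coeff_mul]
  rw [Finset.sum_eq_single (0, m)]
  · simp [Polynomial.coeff_coe]
  · rintro ⟨a, b⟩ hab hne
    rw [Finset.HasAntidiagonal.mem_antidiagonal] at hab
    have hb : b < m := by
      rcases Nat.lt_or_ge b m with h' | h'
      · exact h'
      · exfalso; apply hne; have : b = m := by omega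
        simp [this] at hab ⊢; omega
    simp [h b hb]
  · intro h'; exfalso; apply h'; simp

/-- the fundamental identity `p₁q₂ - p₂q₁ = q₂·rem₁ - q₁·rem₂` (as power series). -/
lemma cross_eq (γ : ℕ → ℂ) (p1 q1 p2 q2 : Polynomial ℂ) :
    ((p1 * q2 - p2 * q1 : Polynomial ℂ) : PowerSeries ℂ)
      = rem γ p2 q2 * (q1 : PowerSeries ℂ) - rem γ p1 q1 * (q2 : PowerSeries ℂ) := by
  simp only [rem, Polynomial.coe_sub, Polynomial.coe_mul]
  ring

/-- coefficients of the cross-polynomial vanish up to the min of the two orders -/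
lemma cross_coeff_eq_zero (γ : ℕ → ℂ) (o1 o2 : ℕ) (p1 q1 p2 q2 : Polynomial ℂ)
    (h1 : Ord γ o1 p1 q1) (h2 : Ord γ o2 p2 q2) :
    ∀ t, t ≤ o1 → t ≤ o2 → (p1 * q2 - p2 * q1).coeff t = 0 := by
  intro t ht1 ht2
  have := congrArg (PowerSeries.coeff t) (cross_eq γ p1 q1 p2 q2)
  rw [Polynomial.coeff_coe] at this
  rw [this, map_sub, coeff_mul_right_eq_zero _ _ o2 t h2 ht2,
    coeff_mul_right_eq_zero _ _ o1 t h1 ht1, sub_zero]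

/-- a polynomial with degree ≤ m and vanishing coefficients < m is a monomial -/
lemma eq_monomial (d : Polynomial ℂ) (m : ℕ) (hdeg : d.natDegree ≤ m)
    (hv : ∀ t, t < m → d.coeff t = 0) : d = C (d.coeff m) * Polynomial.X ^ m := by
  ext t
  rcases lt_trichotomy t m with h | h | h
  · simp [hv t h, Polynomial.coeff_C_mul, Polynomial.coeff_X_pow, Nat.ne_of_lt h]
  · subst h; simp [Polynomial.coeff_C_mul, Polynomial.coeff_X_pow]
  · rw [Polynomial.coeff_eq_zero_of_natDegree_lt (lt_of_le_of_lt hdeg h)]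
    simp [Polynomial.coeff_C_mul, Polynomial.coeff_X_pow, (Nat.ne_of_gt h)]

lemma eq_binomial (d : Polynomial ℂ) (m : ℕ) (hdeg : d.natDegree ≤ m + 1)
    (hv : ∀ t, t < m → d.coeff t = 0) :
    d = C (d.coeff m) * Polynomial.X ^ m + C (d.coeff (m+1)) * Polynomial.X ^ (m+1) := by
  ext t
  rcases lt_trichotomy t m with h | h | h
  · simp [hv t h, Polynomial.coeff_C_mul, Polynomial.coeff_X_pow, Nat.ne_of_lt h]
    intro h'; omega
  · subst h; simp [Polynomial.coeff_C_mul, Polynomial.coeff_X_pow]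
  · rcases Nat.lt_or_ge t (m+1) with h' | h'
    · omega
    rcases Nat.eq_or_lt_of_le h' with h'' | h''
    · subst h''; simp [Polynomial.coeff_C_mul, Polynomial.coeff_X_pow, (by omega : ¬ (m+1 = m))]
    · rw [Polynomial.coeff_eq_zero_of_natDegree_lt (lt_of_le_of_lt hdeg h'')]
      simp only [Polynomial.coeff_add, Polynomial.coeff_C_mul, Polynomial.coeff_X_pow]
      rw [if_neg (by omega : ¬ t = m), if_neg (by omega : ¬ t = m + 1)]; ring



noncomputable def polyOf {m : ℕ} (v : Fin m → ℂ) : Polynomial ℂ :=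
  ∑ r : Fin m, C (v r) * Polynomial.X ^ (r : ℕ)

lemma polyOf_coeff {m : ℕ} (v : Fin m → ℂ) (t : ℕ) :
    (polyOf v).coeff t = if h : t < m then v ⟨t, h⟩ else 0 := by
  unfold polyOf
  rw [Polynomial.finset_sum_coeff]
  simp only [Polynomial.coeff_C_mul, Polynomial.coeff_X_pow]
  split
  · next h =>
    rw [Finset.sum_eq_single (⟨t, h⟩ : Fin m)]
    · simp
    · intro b _ hb; rw [if_neg, mul_zero]; intro he; apply hb; exact (Fin.ext he.symm)
    · simp
  · next h =>
    apply Finset.sum_eq_zero; intro b _; rw [if_neg, mul_zero]; intro he; omega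

lemma polyOf_natDegree_le {m : ℕ} (v : Fin (m+1) → ℂ) : (polyOf v).natDegree ≤ m := by
  rw [Polynomial.natDegree_le_iff_coeff_eq_zero]
  intro t ht; rw [polyOf_coeff]; rw [dif_neg]; omega

lemma polyOf_add {m : ℕ} (v w : Fin m → ℂ) : polyOf (v + w) = polyOf v + polyOf w := by
  unfold polyOf; rw [← Finset.sum_add_distrib]; congr 1; ext r
  simp [map_add, add_mul]

lemma polyOf_smul {m : ℕ} (c : ℂ) (v : Fin m → ℂ) : polyOf (c • v) = C c * polyOf v := by
  unfold polyOf; rw [Finset.mul_sum]; congr 1; ext r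
  simp [map_mul, mul_assoc]

lemma pair_exists (γ : ℕ → ℂ) (l m : ℕ) :
    ∃ p q : Polynomial ℂ, q ≠ 0 ∧ p.natDegree ≤ l ∧ q.natDegree ≤ m ∧ Ord γ (l+m) p q := by
  classical
  set M : ((Fin (m+1)) → ℂ) →ₗ[ℂ] ((Fin m) → ℂ) :=
    { toFun := fun v s => (PowerSeries.coeff (l+1+s))
        ((polyOf v : PowerSeries ℂ) * PowerSeries.mk γ)
      map_add' := by
        intro v w; funext s; simp [polyOf_add, Polynomial.coe_add, add_mul]
      map_smul' := by
        intro c v; funext s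
        simp only [polyOf_smul, Polynomial.coe_mul, mul_assoc, Polynomial.coe_C, RingHom.id_apply,
          Pi.smul_apply, smul_eq_mul]
        rw [PowerSeries.coeff_C_mul] } with hM
  have hni : ¬ Function.Injective M := by
    intro hinj
    have := LinearMap.finrank_le_finrank_of_injective hinj
    rw [Module.finrank_fin_fun, Module.finrank_fin_fun] at this
    omega
  rw [Function.not_injective_iff] at hni
  obtain ⟨a, b, hab, hne⟩ := hni
  set v := a - b with hv
  have hv0 : v ≠ 0 := sub_ne_zero_of_ne hne
  have hMv : M v = 0 := by rw [hv, map_sub, hab, sub_self]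
  set q := polyOf v with hq
  have hqne : q ≠ 0 := by
    intro h
    apply hv0; funext r
    have := polyOf_coeff v (r : ℕ)
    rw [← hq, h, Polynomial.coeff_zero] at this
    simp only [Fin.is_lt, dif_pos, Fin.eta] at this
    exact this.symm
  set p := PowerSeries.trunc (l+1) ((q : PowerSeries ℂ) * PowerSeries.mk γ) with hp
  have hpdeg : p.natDegree ≤ l := by
    have := PowerSeries.degree_trunc_lt ((q : PowerSeries ℂ) * PowerSeries.mk γ) (l+1)
    rw [← hp] at this
    exact Polynomial.natDegree_le_iff_degree_le.mpr (by
      have h2 : p.degree < (l:WithBot ℕ) + 1 := by simpa using this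
      exact Polynomial.degree_le_of_natDegree_le (by rw [hp]; exact Nat.lt_succ_iff.mp (PowerSeries.natDegree_trunc_lt _ l)))
  refine ⟨p, q, hqne, hpdeg, polyOf_natDegree_le v, ?_⟩
  intro t ht
  show (PowerSeries.coeff t)
    ((q : PowerSeries ℂ) * PowerSeries.mk γ - (p : PowerSeries ℂ)) = 0
  rw [map_sub, Polynomial.coeff_coe, hp, PowerSeries.coeff_trunc]
  rcases Nat.lt_or_ge t (l+1) with h | h
  · rw [if_pos h, sub_self]
  · rw [if_neg (by omega)]
    have hs : t - l - 1 < m := by omega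
    have := congrFun hMv ⟨t - l - 1, hs⟩
    have harg : l + 1 + (t - l - 1) = t := by omega
    rw [hM] at this
    simp only [LinearMap.coe_mk, AddHom.coe_mk, Pi.zero_apply] at this
    rw [harg] at this
    rw [← hq] at this
    rw [this, sub_zero]


lemma linear_factor_zero (q : Polynomial ℂ) (hq : q ≠ 0) (a b : ℂ)
    (h : (C a + C b * Polynomial.X) * q = 0) : a = 0 ∧ b = 0 := by
  rcases mul_eq_zero.mp h with h' | h'
  · constructor
    · have := congrArg (fun p => Polynomial.coeff p 0) h'
      simpa using this
    · have := congrArg (fun p => Polynomial.coeff p 1) h'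
      simpa using this
  · exact absurd h' hq

/-- The core algebraic identity behind Wynn's cross rule. -/
lemma core (qC qN qE qS qW : Polynomial ℂ) (cN cE cS cW e aNW aES aSW b1 b2 : ℂ)
    (hqC : qC ≠ 0)
    (h1 : C cN * qE - C cE * qN = C e * Polynomial.X * qC)
    (h2 : C aNW * qC = C cN * Polynomial.X * qW - C cW * qN)
    (h3 : C aES * qC = C cE * Polynomial.X * qS - C cS * qE)
    (h4 : (C b1 + C b2 * Polynomial.X) * qC = C cE * Polynomial.X * qW - C cW * qE)
    (h5 : C aSW * qC = C cS * qW - C cW * qS) :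
    C (cE*cS*cW) * qN + C (cN*cE*cW) * Polynomial.X * qS
      = C (cN*cS*cW) * qE + C (cN*cE*cS) * Polynomial.X * qW := by
  have eA : (C (aNW*cE - cN*b1) + C (-(cN*b2 + cW*e)) * Polynomial.X) * qC = 0 := by
    linear_combination (norm := (simp only [map_mul, map_sub, map_add, map_neg]; ring1))
      (C cE) * h2 - (C cN) * h4 + (C cW) * h1
  obtain ⟨-, hA⟩ := linear_factor_zero qC hqC _ _ eA
  have hA : cN*b2 + cW*e = 0 := neg_eq_zero.mp hA
  have eB : (C (cS*b1 - cW*aES) + C (cS*b2 - cE*aSW) * Polynomial.X) * qC = 0 := by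
    linear_combination (norm := (simp only [map_mul, map_sub, map_add, map_neg]; ring1))
      (C cS) * h4 - (C cE) * Polynomial.X * h5 - (C cW) * h3
  obtain ⟨-, hB⟩ := linear_factor_zero qC hqC _ _ eB
  have hkey : C (cS*cW*e + cN*cE*aSW) = 0 := by
    have h6 : cS*(cN*b2 + cW*e) = 0 := by rw [hA]; ring
    have h7 : cS*cW*e + cN*cE*aSW = 0 := by linear_combination h6 - cN * hB
    rw [h7, map_zero]
  linear_combination (norm := (simp only [map_mul, map_sub, map_add, map_neg, map_zero]; ring1))
    (-(C cS * C cW)) * h1 + (C cN * C cE * Polynomial.X) * h5 - (Polynomial.X * qC) * hkey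
/-- The inductive step: from Padé representations of the C, E, W, S entries and the
epsilon recursion, deduce the Padé representation of the N entry. -/
lemma step (γ : ℕ → ℂ) (z : ℂ) (hz : z ≠ 0) (l j : ℕ) (hl : 1 ≤ l)
    (pC qC pE qE pW qW pN qN pS qS : Polynomial ℂ)
    (hpC : pC.natDegree ≤ l) (hqC : qC.natDegree ≤ j) (hoC : Ord γ (l+j) pC qC)
    (hpE : pE.natDegree ≤ l+1) (hqE : qE.natDegree ≤ j) (hoE : Ord γ (l+j+1) pE qE)
    (hpW : pW.natDegree ≤ l-1) (hqW : qW.natDegree ≤ j) (hoW : Ord γ (l+j-1) pW qW)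
    (hqN : qN ≠ 0) (hpN : pN.natDegree ≤ l) (hqNd : qN.natDegree ≤ j+1) (hoN : Ord γ (l+j+1) pN qN)
    (cS aES aSW : ℂ) (hcS : cS ≠ 0)
    (hDS : pS*qC - pC*qS = C cS * Polynomial.X^(l+j))
    (hES : pE*qS - pS*qE = C aES * Polynomial.X^(l+j))
    (hSW : pS*qW - pW*qS = C aSW * Polynomial.X^(l+j))
    (hqCz : qC.eval z ≠ 0) (hqEz : qE.eval z ≠ 0) (hqWz : qW.eval z ≠ 0)
    (eC eE eW eN o1 o2 s1 s2 : ℂ)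
    (hvC : eC = pC.eval z / qC.eval z) (hvE : eE = pE.eval z / qE.eval z)
    (hvW : eW = pW.eval z / qW.eval z)
    (heN : eN = eC + 1/(o1 - o2))
    (ho1 : o1 = s1 + 1/(eE - eC))
    (ho2 : o2 = s2 + 1/(eC - eW))
    (hS : s2 - s1 = qS.eval z * qC.eval z / (cS * z^(l+j)))
    (hodd : o1 - o2 ≠ 0)
    (hdE : eE - eC ≠ 0) (hdW : eC - eW ≠ 0) :
    qN.eval z ≠ 0 ∧ eN = pN.eval z / qN.eval z := by
  set L := l + j with hL
  -- monomial facts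
  set cN := (pN*qC - pC*qN).coeff (L+1) with hcNdef
  have hDN : pN*qC - pC*qN = C cN * Polynomial.X^(L+1) := by
    apply eq_monomial
    · exact le_trans (Polynomial.natDegree_sub_le _ _)
        (by simp only [max_le_iff]
            exact ⟨le_trans (Polynomial.natDegree_mul_le_of_le hpN hqC) (by omega),
              le_trans (Polynomial.natDegree_mul_le_of_le hpC hqNd) (by omega)⟩)
    · intro t ht
      exact cross_coeff_eq_zero γ (L+1) L pN qN pC qC hoN hoC t (by omega) (by omega)
  set cE := (pE*qC - pC*qE).coeff (L+1) with hcEdef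
  have hDE : pE*qC - pC*qE = C cE * Polynomial.X^(L+1) := by
    apply eq_monomial
    · exact le_trans (Polynomial.natDegree_sub_le _ _)
        (by simp only [max_le_iff]
            exact ⟨le_trans (Polynomial.natDegree_mul_le_of_le hpE hqC) (by omega),
              le_trans (Polynomial.natDegree_mul_le_of_le hpC hqE) (by omega)⟩)
    · intro t ht
      exact cross_coeff_eq_zero γ (L+1) L pE qE pC qC hoE hoC t (by omega) (by omega)
  set cW := (pW*qC - pC*qW).coeff L with hcWdef
  have hDW : pW*qC - pC*qW = C cW * Polynomial.X^L := by
    apply eq_monomial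
    · exact le_trans (Polynomial.natDegree_sub_le _ _)
        (by simp only [max_le_iff]
            exact ⟨le_trans (Polynomial.natDegree_mul_le_of_le hpW hqC) (by omega),
              le_trans (Polynomial.natDegree_mul_le_of_le hpC hqW) (by omega)⟩)
    · intro t ht
      exact cross_coeff_eq_zero γ (L-1) L pW qW pC qC hoW hoC t (by omega) (by omega)
  set e := (pN*qE - pE*qN).coeff (L+2) with hedef
  have hNE : pN*qE - pE*qN = C e * Polynomial.X^(L+2) := by
    apply eq_monomial
    · exact le_trans (Polynomial.natDegree_sub_le _ _)
        (by simp only [max_le_iff]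
            exact ⟨le_trans (Polynomial.natDegree_mul_le_of_le hpN hqE) (by omega),
              le_trans (Polynomial.natDegree_mul_le_of_le hpE hqNd) (by omega)⟩)
    · intro t ht
      exact cross_coeff_eq_zero γ (L+1) (L+1) pN qN pE qE hoN hoE t (by omega) (by omega)
  set aNW := (pN*qW - pW*qN).coeff L with haNWdef
  have hNW : pN*qW - pW*qN = C aNW * Polynomial.X^L := by
    apply eq_monomial
    · exact le_trans (Polynomial.natDegree_sub_le _ _)
        (by simp only [max_le_iff]
            exact ⟨le_trans (Polynomial.natDegree_mul_le_of_le hpN hqW) (by omega),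
              le_trans (Polynomial.natDegree_mul_le_of_le hpW hqNd) (by omega)⟩)
    · intro t ht
      exact cross_coeff_eq_zero γ (L+1) (L-1) pN qN pW qW hoN hoW t (by omega) (by omega)
  set b1 := (pE*qW - pW*qE).coeff L with hb1def
  set b2 := (pE*qW - pW*qE).coeff (L+1) with hb2def
  have hEW : pE*qW - pW*qE = C b1 * Polynomial.X^L + C b2 * Polynomial.X^(L+1) := by
    apply eq_binomial
    · exact le_trans (Polynomial.natDegree_sub_le _ _)
        (by simp only [max_le_iff]
            exact ⟨le_trans (Polynomial.natDegree_mul_le_of_le hpE hqW) (by omega),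
              le_trans (Polynomial.natDegree_mul_le_of_le hpW hqE) (by omega)⟩)
    · intro t ht
      exact cross_coeff_eq_zero γ (L+1) (L-1) pE qE pW qW hoE hoW t (by omega) (by omega)
  set L := l + j with hL
  have hqC0 : qC ≠ 0 := fun h => hqCz (by rw [h]; simp)
  have hXL : (Polynomial.X ^ L : Polynomial ℂ) ≠ 0 := pow_ne_zero _ Polynomial.X_ne_zero
  have hXL1 : (Polynomial.X ^ (L+1) : Polynomial ℂ) ≠ 0 := pow_ne_zero _ Polynomial.X_ne_zero
  -- the five linear relations
  have rel1 : C cN * qE - C cE * qN = C e * Polynomial.X * qC := by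
    apply mul_left_cancel₀ hXL1
    have hr : qC * (pN*qE - pE*qN) = (pN*qC - pC*qN)*qE - (pE*qC - pC*qE)*qN := by ring
    rw [hNE, hDN, hDE] at hr
    linear_combination - hr
  have rel2 : C aNW * qC = C cN * Polynomial.X * qW - C cW * qN := by
    apply mul_left_cancel₀ hXL
    have hr : qC * (pN*qW - pW*qN) = (pN*qC - pC*qN)*qW - (pW*qC - pC*qW)*qN := by ring
    rw [hNW, hDN, hDW] at hr
    linear_combination hr
  have rel3 : C aES * qC = C cE * Polynomial.X * qS - C cS * qE := by
    apply mul_left_cancel₀ hXL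
    have hr : qC * (pE*qS - pS*qE) = (pE*qC - pC*qE)*qS - (pS*qC - pC*qS)*qE := by ring
    rw [hES, hDE, hDS] at hr
    linear_combination hr
  have rel4 : (C b1 + C b2 * Polynomial.X) * qC = C cE * Polynomial.X * qW - C cW * qE := by
    apply mul_left_cancel₀ hXL
    have hr : qC * (pE*qW - pW*qE) = (pE*qC - pC*qE)*qW - (pW*qC - pC*qW)*qE := by ring
    rw [hEW, hDE, hDW] at hr
    linear_combination hr
  have rel5 : C aSW * qC = C cS * qW - C cW * qS := by
    apply mul_left_cancel₀ hXL
    have hr : qC * (pS*qW - pW*qS) = (pS*qC - pC*qS)*qW - (pW*qC - pC*qW)*qS := by ring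
    rw [hSW, hDS, hDW] at hr
    linear_combination hr
  -- value facts
  have hDEz : pE.eval z * qC.eval z - pC.eval z * qE.eval z = cE * z^(L+1) := by
    have := congrArg (Polynomial.eval z) hDE
    simpa using this
  have hDWz : pW.eval z * qC.eval z - pC.eval z * qW.eval z = cW * z^L := by
    have := congrArg (Polynomial.eval z) hDW
    simpa using this
  have hDNz : pN.eval z * qC.eval z - pC.eval z * qN.eval z = cN * z^(L+1) := by
    have := congrArg (Polynomial.eval z) hDN
    simpa using this
  have haE : (eE - eC) * (qE.eval z * qC.eval z) = cE * z^(L+1) := by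
    rw [hvE, hvC, ← hDEz]; field_simp
  have haW : (eC - eW) * (qW.eval z * qC.eval z) = -(cW * z^L) := by
    rw [hvW, hvC, ← hDWz]; field_simp; ring
  have hcE0 : cE ≠ 0 := by
    intro h
    rw [h, zero_mul] at haE
    exact (mul_ne_zero hdE (mul_ne_zero hqEz hqCz)) haE
  have hcW0 : cW ≠ 0 := by
    intro h
    rw [h, zero_mul, neg_zero] at haW
    exact (mul_ne_zero hdW (mul_ne_zero hqWz hqCz)) haW
  -- the leading remainder coefficient of C is nonzero
  have hρ : cE = qE.coeff 0 * (PowerSeries.coeff (L+1)) (rem γ pC qC) := by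
    have h := congrArg (PowerSeries.coeff (L+1)) (cross_eq γ pE qE pC qC)
    rw [Polynomial.coeff_coe, hDE] at h
    simp only [Polynomial.coeff_C_mul, Polynomial.coeff_X_pow, if_pos rfl, mul_one] at h
    rw [map_sub, mul_comm (rem γ pC qC) _, coeff_poly_mul qE (rem γ pC qC) (L+1)
      (fun t ht => hoC t (by omega)),
      coeff_mul_right_eq_zero (rem γ pE qE) _ (L+1) (L+1) hoE (le_refl _), sub_zero] at h
    split_ifs at h with hh
    · simpa using h
    · exact (hh rfl).elim
  have hρ0 : (PowerSeries.coeff (L+1)) (rem γ pC qC) ≠ 0 := by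
    intro h; exact hcE0 (by rw [hρ, h, mul_zero])
  -- cN ≠ 0
  have hcN0 : cN ≠ 0 := by
    intro h0
    rw [h0, map_zero, zero_mul] at hDN
    have hDN' : pN*qC = pC*qN := sub_eq_zero.mp hDN
    have hps : rem γ pC qC * (qN : PowerSeries ℂ) = rem γ pN qN * (qC : PowerSeries ℂ) := by
      have h := cross_eq γ pN qN pC qC
      rw [hDN, Polynomial.coe_zero] at h
      exact (sub_eq_zero.mp h.symm)
    have hq0 : qN.coeff 0 = 0 := by
      have h1 := congrArg (PowerSeries.coeff (L+1)) hps
      rw [mul_comm (rem γ pC qC) _, coeff_poly_mul qN (rem γ pC qC) (L+1)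
        (fun t ht => hoC t (by omega)),
        coeff_mul_right_eq_zero (rem γ pN qN) _ (L+1) (L+1) hoN (le_refl _)] at h1
      exact (mul_eq_zero.mp h1).resolve_right hρ0
    have hp0 : pN.coeff 0 = 0 := by
      have h2 := hoN 0 (by omega)
      rw [rem, map_sub] at h2
      simp only [PowerSeries.coeff_zero_eq_constantCoeff, map_mul, Polynomial.constantCoeff_coe,
        PowerSeries.constantCoeff_mk, hq0, zero_mul, zero_sub, neg_eq_zero] at h2
      exact h2
    obtain ⟨q', hq'⟩ := Polynomial.X_dvd_iff.mpr hq0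
    obtain ⟨p', hp'⟩ := Polynomial.X_dvd_iff.mpr hp0
    have hq'd : q'.natDegree ≤ j := by
      rw [Polynomial.natDegree_le_iff_coeff_eq_zero]
      intro m hm
      have h3 : qN.coeff (m+1) = 0 := Polynomial.coeff_eq_zero_of_natDegree_lt (by omega)
      rw [hq', Polynomial.coeff_X_mul] at h3; exact h3
    have hp'd : p'.natDegree ≤ l - 1 := by
      rw [Polynomial.natDegree_le_iff_coeff_eq_zero]
      intro m hm
      have h3 : pN.coeff (m+1) = 0 := Polynomial.coeff_eq_zero_of_natDegree_lt (by omega)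
      rw [hp', Polynomial.coeff_X_mul] at h3; exact h3
    have ho' : Ord γ L p' q' := by
      intro t ht
      have h3 := hoN (t+1) (by omega)
      rw [rem, hq', hp', Polynomial.coe_mul, Polynomial.coe_mul, Polynomial.coe_X] at h3
      have h4 : (PowerSeries.X * (q' : PowerSeries ℂ)) * PowerSeries.mk γ
            - PowerSeries.X * (p' : PowerSeries ℂ)
          = PowerSeries.X * ((q' : PowerSeries ℂ) * PowerSeries.mk γ - (p' : PowerSeries ℂ)) := by
        ring
      rw [h4, PowerSeries.coeff_succ_X_mul] at h3
      exact h3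
    have hd' : p' * qW - pW * q' = 0 := by
      ext t
      rcases le_or_gt t (L-1) with h | h
      · rw [cross_coeff_eq_zero γ L (L-1) p' q' pW qW ho' hoW t (by omega) (by omega)]
        simp
      · rw [Polynomial.coeff_eq_zero_of_natDegree_lt, Polynomial.coeff_zero]
        refine lt_of_le_of_lt (le_trans (Polynomial.natDegree_sub_le _ _) ?_) h
        simp only [max_le_iff]
        exact ⟨le_trans (Polynomial.natDegree_mul_le_of_le hp'd hqW) (by omega),
          le_trans (Polynomial.natDegree_mul_le_of_le hpW hq'd) (by omega)⟩
    have hpq : p' * qC = pC * q' := by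
      apply mul_left_cancel₀ (Polynomial.X_ne_zero (R := ℂ))
      rw [hq', hp'] at hDN'
      linear_combination hDN'
    have h6 : q' * (Polynomial.C cW * Polynomial.X^L) = 0 := by
      rw [← hDW]
      linear_combination (-qC) * hd' + qW * hpq
    have h7 : q' = 0 := by
      rcases mul_eq_zero.mp h6 with h | h
      · exact h
      · exact absurd h (mul_ne_zero (Polynomial.C_ne_zero.mpr hcW0) hXL)
    exact hqN (by rw [hq', h7, mul_zero])
  -- the cross-rule identity
  have star := core qC qN qE qS qW cN cE cS cW e aNW aES aSW b1 b2 hqC0 rel1 rel2 rel3 rel4 rel5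
  have starz := congrArg (Polynomial.eval z) star
  simp only [Polynomial.eval_add, Polynomial.eval_mul, Polynomial.eval_C,
    Polynomial.eval_X] at starz
  have hiE : (1/(eE - eC)) * (cE * z^(L+1)) = qE.eval z * qC.eval z := by
    rw [← haE]; field_simp
  have hiW : (1/(eC - eW)) * (cW * z^L) = -(qW.eval z * qC.eval z) := by
    field_simp
    linear_combination haW
  have hiS : (s2 - s1) * (cS * z^L) = qS.eval z * qC.eval z := by
    rw [hS]; field_simp; rfl
  have hT : o1 - o2 = 1/(eE-eC) - 1/(eC-eW) - (s2 - s1) := by rw [ho1, ho2]; ring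
  have key' : (cN * (o1-o2) * z^(L+1)) * (cE*(cS*cW)) = (qN.eval z * qC.eval z) * (cE*(cS*cW)) := by
    rw [hT]
    linear_combination (cN*cS*cW)*hiE - (cN*cE*cS*z)*hiW - (cN*cE*cW*z)*hiS - (qC.eval z)*starz
  have key : cN * (o1-o2) * z^(L+1) = qN.eval z * qC.eval z :=
    mul_right_cancel₀ (mul_ne_zero hcE0 (mul_ne_zero hcS hcW0)) key'
  have hqNz : qN.eval z ≠ 0 := by
    intro h
    rw [h, zero_mul] at key
    exact (mul_ne_zero (mul_ne_zero hcN0 hodd) (pow_ne_zero _ hz)) key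
  refine ⟨hqNz, ?_⟩
  have hinv : 1/(o1 - o2) = cN * z^(L+1) / (qN.eval z * qC.eval z) := by
    rw [← key]
    field_simp
  rw [heN, hvC, hinv]
  rw [div_add_div _ _ hqCz (mul_ne_zero hqNz hqCz), div_eq_div_iff (mul_ne_zero hqCz (mul_ne_zero hqNz hqCz)) hqNz]
  linear_combination (-(Polynomial.eval z qN * Polynomial.eval z qC)) * hDNz



lemma wynnEpsC_zero (s : ℕ → ℂ) (n : ℕ) : wynnEpsC s 0 n = 0 := rfl
lemma wynnEpsC_one (s : ℕ → ℂ) (n : ℕ) : wynnEpsC s 1 n = s n := rfl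
lemma wynnEpsC_add_two (s : ℕ → ℂ) (k n : ℕ) :
    wynnEpsC s (k+2) n
      = wynnEpsC s k (n+1) + 1/(wynnEpsC s (k+1) (n+1) - wynnEpsC s (k+1) n) := rfl

lemma base_pair (γ : ℕ → ℂ) (z : ℂ) (i : ℕ) :
    ∃ p : Polynomial ℂ, p.natDegree ≤ i ∧ Ord γ i p 1 ∧
      p.eval z = ∑ t ∈ Finset.range (i+1), γ t * z^t := by
  refine ⟨PowerSeries.trunc (i+1) (PowerSeries.mk γ), ?_, ?_, ?_⟩
  · exact Nat.lt_succ_iff.mp (PowerSeries.natDegree_trunc_lt (PowerSeries.mk γ) i)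
  · intro t ht
    show (PowerSeries.coeff t)
      (((1 : Polynomial ℂ) : PowerSeries ℂ) * PowerSeries.mk γ
        - ((PowerSeries.trunc (i+1) (PowerSeries.mk γ) : Polynomial ℂ) : PowerSeries ℂ)) = 0
    rw [Polynomial.coe_one, one_mul, map_sub, Polynomial.coeff_coe, PowerSeries.coeff_trunc,
      if_pos (by omega)]
    simp
  · rw [Polynomial.eval_eq_sum_range' (PowerSeries.natDegree_trunc_lt (PowerSeries.mk γ) i)]
    apply Finset.sum_congr rfl
    intro t ht
    rw [PowerSeries.coeff_trunc, if_pos (Finset.mem_range.mp ht)]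
    simp

lemma value_unique (γ : ℕ → ℂ) (z : ℂ) (l m : ℕ) (p q P' Q' : Polynomial ℂ)
    (hp : p.natDegree ≤ l) (hq : q.natDegree ≤ m) (ho : Ord γ (l+m) p q)
    (hP : P'.natDegree ≤ l) (hQ : Q'.natDegree ≤ m) (hO : Ord γ (l+m) P' Q')
    (hqz : q.eval z ≠ 0) (hQz : Q'.eval z ≠ 0) :
    p.eval z / q.eval z = P'.eval z / Q'.eval z := by
  have hd : p * Q' - P' * q = 0 := by
    ext t
    rcases le_or_gt t (l+m) with h | h
    · rw [cross_coeff_eq_zero γ (l+m) (l+m) p q P' Q' ho hO t h h]; simp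
    · rw [Polynomial.coeff_eq_zero_of_natDegree_lt, Polynomial.coeff_zero]
      refine lt_of_le_of_lt (le_trans (Polynomial.natDegree_sub_le _ _) ?_) h
      simp only [max_le_iff]
      exact ⟨Polynomial.natDegree_mul_le_of_le hp hQ, Polynomial.natDegree_mul_le_of_le hP hq⟩
  have hz := congrArg (Polynomial.eval z) hd
  simp only [Polynomial.eval_sub, Polynomial.eval_mul, Polynomial.eval_zero] at hz
  rw [div_eq_div_iff hqz hQz]
  linear_combination hz

theorem wynnEps_eq_pade'
    (γ : ℕ → ℂ) (n k : ℕ) (P Q : Polynomial ℂ)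
    (hP : P.natDegree ≤ n + k) (hQ : Q.natDegree ≤ k) (hQ0 : Q.eval 0 = 1)
    (horder : ∀ i : ℕ, i ≤ n + 2 * k →
      (PowerSeries.coeff i)
        ((Q : PowerSeries ℂ) * PowerSeries.mk γ - (P : PowerSeries ℂ)) = 0)
    (z : ℂ) (hQz : Q.eval z ≠ 0)
    (sm : ℕ → ℂ) (hsm : ∀ m : ℕ, sm m = ∑ i ∈ Finset.range (m + 1), γ i * z ^ i)
    (hnz : ∀ m i : ℕ, m < 2 * k → n ≤ i → i + m + 1 ≤ n + 2 * k →
      wynnEpsC sm (m + 1) (i + 1) - wynnEpsC sm (m + 1) i ≠ 0) :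
    wynnEpsC sm (2 * k + 1) n = P.eval z / Q.eval z := by
  classical
  have hOQ : Ord γ (n + k + k) P Q := by
    intro t ht
    exact horder t (by omega)
  rcases Nat.eq_zero_or_pos k with hk0 | hkpos
  · -- k = 0
    subst hk0
    obtain ⟨p, hpdeg, hpO, hpval⟩ := base_pair γ z n
    have huniq := value_unique γ z n 0 p 1 P Q hpdeg (by simp)
      (by rw [(by omega : n + 0 = n)]; exact hpO) (by omega) hQ
      (by rw [(by omega : n + 0 = n + 0 + 0)] at hOQ; exact hOQ)
      (by simp) hQz
    rw [show 2*0+1 = 1 from rfl, wynnEpsC_one, hsm, ← hpval]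
    simpa using huniq
  · -- k ≥ 1
    have hz : z ≠ 0 := by
      intro h0
      apply hnz 0 n (by omega) (le_refl n) (by omega)
      rw [wynnEpsC_one, wynnEpsC_one, hsm, hsm, h0, Finset.sum_range_succ]
      simp
    have MAIN : ∀ j, j ≤ k → ∀ i, n ≤ i → i + 2*j ≤ n + 2*k →
        ∃ p q : Polynomial ℂ, p.natDegree ≤ i + j ∧ q.natDegree ≤ j ∧
          Ord γ (i + j + j) p q ∧ q.eval z ≠ 0 ∧
          wynnEpsC sm (2*j+1) i = p.eval z / q.eval z := by
      intro j
      induction j using Nat.strong_induction_on with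
      | _ j IH =>
        intro hjk i hni hir
        cases j with
        | zero =>
          obtain ⟨p, hpdeg, hpO, hpval⟩ := base_pair γ z i
          refine ⟨p, 1, by omega, by simp, ?_, by simp, ?_⟩
          · rw [(by omega : i + 0 + 0 = i)]; exact hpO
          · rw [show 2*0+1 = 1 from rfl, wynnEpsC_one, hsm, ← hpval]
            simp
        | succ j' =>
          -- C at (i+1), E at (i+2), W at i, all in column j'
          obtain ⟨pC, qC, hpC, hqC, hoC, hqCz, hvC⟩ :=
            IH j' (by omega) (by omega) (i+1) (by omega) (by omega)
          obtain ⟨pE, qE, hpE, hqE, hoE, hqEz, hvE⟩ :=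
            IH j' (by omega) (by omega) (i+2) (by omega) (by omega)
          obtain ⟨pW, qW, hpW, hqW, hoW, hqWz, hvW⟩ :=
            IH j' (by omega) (by omega) i (by omega) (by omega)
          obtain ⟨pN, qN, hqN0, hpN, hqNd, hoN⟩ := pair_exists γ (i+1+j') (j'+1)
          -- epsilon recursion equations
          have heN : wynnEpsC sm (2*(j'+1)+1) i
              = wynnEpsC sm (2*j'+1) (i+1)
                + 1/(wynnEpsC sm (2*j'+2) (i+1) - wynnEpsC sm (2*j'+2) i) := by
            rw [(by ring : 2*(j'+1)+1 = (2*j'+1)+2), wynnEpsC_add_two,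
              (by ring : 2*j'+1+1 = 2*j'+2)]
          have ho1 : wynnEpsC sm (2*j'+2) (i+1)
              = wynnEpsC sm (2*j') (i+2)
                + 1/(wynnEpsC sm (2*j'+1) (i+2) - wynnEpsC sm (2*j'+1) (i+1)) := by
            rw [wynnEpsC_add_two]
          have ho2 : wynnEpsC sm (2*j'+2) i
              = wynnEpsC sm (2*j') (i+1)
                + 1/(wynnEpsC sm (2*j'+1) (i+1) - wynnEpsC sm (2*j'+1) i) := by
            rw [wynnEpsC_add_two]
          have hodd : wynnEpsC sm (2*j'+2) (i+1) - wynnEpsC sm (2*j'+2) i ≠ 0 := by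
            have := hnz (2*j'+1) i (by omega) hni (by omega)
            rw [(by ring : 2*j'+1+1 = 2*j'+2)] at this
            exact this
          have hdE : wynnEpsC sm (2*j'+1) (i+2) - wynnEpsC sm (2*j'+1) (i+1) ≠ 0 := by
            have := hnz (2*j') (i+1) (by omega) (by omega) (by omega)
            rw [(by omega : i+1+1 = i+2)] at this
            exact this
          have hdW : wynnEpsC sm (2*j'+1) (i+1) - wynnEpsC sm (2*j'+1) i ≠ 0 :=
            hnz (2*j') i (by omega) hni (by omega)
          -- S data
          obtain ⟨pS, qS, cS, aES, aSW, hcS, hDS, hES, hSW, hS⟩ :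
              ∃ (pS qS : Polynomial ℂ) (cS aES aSW : ℂ), cS ≠ 0 ∧
                (pS*qC - pC*qS = C cS * Polynomial.X^(i+1+j'+j')) ∧
                (pE*qS - pS*qE = C aES * Polynomial.X^(i+1+j'+j')) ∧
                (pS*qW - pW*qS = C aSW * Polynomial.X^(i+1+j'+j')) ∧
                (wynnEpsC sm (2*j') (i+1) - wynnEpsC sm (2*j') (i+2)
                  = qS.eval z * qC.eval z / (cS * z^(i+1+j'+j'))) := by
            cases j' with
            | zero =>
              have hqCc := Polynomial.eq_C_of_natDegree_le_zero hqC
              refine ⟨Polynomial.X^(i+1), 0, qC.coeff 0, -(qE.coeff 0), qW.coeff 0, ?_, ?_, ?_, ?_, ?_⟩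
              · intro h
                rw [hqCc, h] at hqCz
                simp at hqCz
              · rw [mul_zero, sub_zero, (by omega : i+1+0+0 = i+1)]
                conv_lhs => rw [hqCc]
                ring
              · have hqEc := Polynomial.eq_C_of_natDegree_le_zero hqE
                rw [mul_zero, zero_sub, (by omega : i+1+0+0 = i+1)]
                conv_lhs => rw [hqEc]
                simp only [map_neg]
                ring
              · have hqWc := Polynomial.eq_C_of_natDegree_le_zero hqW
                rw [mul_zero, sub_zero, (by omega : i+1+0+0 = i+1)]
                conv_lhs => rw [hqWc]
                ring
              · show (0:ℂ) - 0 = _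
                simp
            | succ j'' =>
              obtain ⟨pS, qS, hpS, hqS, hoS, hqSz, hvS⟩ :=
                IH j'' (by omega) (by omega) (i+2) (by omega) (by omega)
              have hrec : wynnEpsC sm (2*(j''+1)+1) (i+1)
                  = wynnEpsC sm (2*j''+1) (i+2)
                    + 1/(wynnEpsC sm (2*(j''+1)) (i+2) - wynnEpsC sm (2*(j''+1)) (i+1)) := by
                rw [(by ring : 2*(j''+1)+1 = (2*j''+1)+2), wynnEpsC_add_two,
                  (by ring : 2*j''+1+1 = 2*(j''+1))]
              have hs12 : wynnEpsC sm (2*(j''+1)) (i+2) - wynnEpsC sm (2*(j''+1)) (i+1) ≠ 0 := by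
                have := hnz (2*j''+1) (i+1) (by omega) (by omega) (by omega)
                rw [(by ring : 2*j''+1+1 = 2*(j''+1)), (by omega : i+1+1 = i+2)] at this
                exact this
              have hdS : wynnEpsC sm (2*j''+1) (i+2) - wynnEpsC sm (2*(j''+1)+1) (i+1) ≠ 0 := by
                rw [hrec]
                intro h
                apply one_div_ne_zero hs12
                linear_combination -h
              have hDSmon : pS*qC - pC*qS
                  = C ((pS*qC - pC*qS).coeff (i+1+(j''+1)+(j''+1)))
                      * Polynomial.X^(i+1+(j''+1)+(j''+1)) := by
                apply eq_monomial
                · exact le_trans (Polynomial.natDegree_sub_le _ _)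
                    (by simp only [max_le_iff]
                        exact ⟨le_trans (Polynomial.natDegree_mul_le_of_le hpS hqC) (by omega),
                          le_trans (Polynomial.natDegree_mul_le_of_le hpC hqS) (by omega)⟩)
                · intro t ht
                  exact cross_coeff_eq_zero γ (i+2+j''+j'') (i+1+(j''+1)+(j''+1)) pS qS pC qC
                    hoS hoC t (by omega) (by omega)
              have hDSz : pS.eval z * qC.eval z - pC.eval z * qS.eval z
                  = (pS*qC - pC*qS).coeff (i+1+(j''+1)+(j''+1)) * z^(i+1+(j''+1)+(j''+1)) := by
                have := congrArg (Polynomial.eval z) hDSmon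
                simpa using this
              have haS : (wynnEpsC sm (2*j''+1) (i+2) - wynnEpsC sm (2*(j''+1)+1) (i+1))
                    * (qS.eval z * qC.eval z)
                  = (pS*qC - pC*qS).coeff (i+1+(j''+1)+(j''+1)) * z^(i+1+(j''+1)+(j''+1)) := by
                rw [hvS, hvC, ← hDSz]
                field_simp
              have hcS : (pS*qC - pC*qS).coeff (i+1+(j''+1)+(j''+1)) ≠ 0 := by
                intro h
                rw [h, zero_mul] at haS
                exact (mul_ne_zero hdS (mul_ne_zero hqSz hqCz)) haS
              refine ⟨pS, qS, (pS*qC - pC*qS).coeff (i+1+(j''+1)+(j''+1)),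
                (pE*qS - pS*qE).coeff (i+1+(j''+1)+(j''+1)),
                (pS*qW - pW*qS).coeff (i+1+(j''+1)+(j''+1)), ?_, ?_, ?_, ?_, ?_⟩
              case refine_2 =>
                apply eq_monomial
                · exact le_trans (Polynomial.natDegree_sub_le _ _)
                    (by simp only [max_le_iff]
                        exact ⟨le_trans (Polynomial.natDegree_mul_le_of_le hpS hqC) (by omega),
                          le_trans (Polynomial.natDegree_mul_le_of_le hpC hqS) (by omega)⟩)
                · intro t ht
                  exact cross_coeff_eq_zero γ (i+2+j''+j'') (i+1+(j''+1)+(j''+1)) pS qS pC qC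
                    hoS hoC t (by omega) (by omega)
              case refine_3 =>
                apply eq_monomial
                · exact le_trans (Polynomial.natDegree_sub_le _ _)
                    (by simp only [max_le_iff]
                        exact ⟨le_trans (Polynomial.natDegree_mul_le_of_le hpE hqS) (by omega),
                          le_trans (Polynomial.natDegree_mul_le_of_le hpS hqE) (by omega)⟩)
                · intro t ht
                  exact cross_coeff_eq_zero γ (i+2+(j''+1)+(j''+1)) (i+2+j''+j'') pE qE pS qS
                    hoE hoS t (by omega) (by omega)
              case refine_4 =>
                apply eq_monomial
                · exact le_trans (Polynomial.natDegree_sub_le _ _)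
                    (by simp only [max_le_iff]
                        exact ⟨le_trans (Polynomial.natDegree_mul_le_of_le hpS hqW) (by omega),
                          le_trans (Polynomial.natDegree_mul_le_of_le hpW hqS) (by omega)⟩)
                · intro t ht
                  exact cross_coeff_eq_zero γ (i+2+j''+j'') (i+j''+1+(j''+1)) pS qS pW qW
                    hoS hoW t (by omega) (by omega)
              case refine_1 => exact hcS
              case refine_5 =>
                have h2 : wynnEpsC sm (2*j''+1) (i+2) - wynnEpsC sm (2*(j''+1)+1) (i+1)
                    = -(1/(wynnEpsC sm (2*(j''+1)) (i+2) - wynnEpsC sm (2*(j''+1)) (i+1))) := by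
                  rw [hrec]; ring
                rw [h2] at haS
                rw [eq_div_iff (mul_ne_zero hcS (pow_ne_zero _ hz))]
                rw [← haS]
                field_simp
                ring
          -- apply the step lemma
          obtain ⟨hqNz, hval⟩ := step γ z hz (i+1+j') j' (by omega)
            pC qC pE qE pW qW pN qN pS qS
            hpC hqC hoC
            (show pE.natDegree ≤ i+1+j'+1 by omega) hqE
            (show Ord γ (i+1+j'+j'+1) pE qE by
              rw [(by omega : i+1+j'+j'+1 = i+2+j'+j')]; exact hoE)
            (show pW.natDegree ≤ i+1+j'-1 by omega) hqW
            (show Ord γ (i+1+j'+j'-1) pW qW by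
              rw [(by omega : i+1+j'+j'-1 = i+j'+j')]; exact hoW)
            hqN0 hpN hqNd
            (show Ord γ (i+1+j'+j'+1) pN qN by
              rw [(by omega : i+1+j'+j'+1 = i+1+j'+(j'+1))]; exact hoN)
            cS aES aSW hcS hDS hES hSW
            hqCz hqEz hqWz
            (wynnEpsC sm (2*j'+1) (i+1)) (wynnEpsC sm (2*j'+1) (i+2)) (wynnEpsC sm (2*j'+1) i)
            (wynnEpsC sm (2*(j'+1)+1) i)
            (wynnEpsC sm (2*j'+2) (i+1)) (wynnEpsC sm (2*j'+2) i)
            (wynnEpsC sm (2*j') (i+2)) (wynnEpsC sm (2*j') (i+1))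
            hvC hvE hvW heN ho1 ho2 hS hodd hdE hdW
          refine ⟨pN, qN, by omega, hqNd, ?_, hqNz, hval⟩
          rw [(by omega : i+(j'+1)+(j'+1) = i+1+j'+(j'+1))]
          exact hoN
    obtain ⟨p, q, hp, hq, ho, hqz, hval⟩ := MAIN k (le_refl k) n (le_refl n) (by omega)
    rw [hval]
    exact value_unique γ z (n+k) k p q P Q hp hq ho hP hQ hOQ hqz hQz
end WynnPade

/-- applied to the partial sums `f_m(z) = Σ_{i=0}^m γ_i z^i` of a power
series, Wynn's epsilon algorithm produces the Padé approximants: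
`ε_{2k}⁽ⁿ⁾ = [n+k/k]_f(z) = P(z)/Q(z)`, where `P/Q` satisfies the Padé order
condition of the approximant `[n+k/k]`, provided `Q(z) ≠ 0` and all differences
appearing in the computation of `ε_{2k}⁽ⁿ⁾` are nonzero.
(In `wynnEpsC`, the mathematical entry `ε_m⁽ⁱ⁾` is `wynnEpsC s (m+1) i`.) -/
theorem wynnEps_eq_pade
    (γ : ℕ → ℂ) (n k : ℕ) (P Q : Polynomial ℂ)
    (hP : P.natDegree ≤ n + k) (hQ : Q.natDegree ≤ k) (hQ0 : Q.eval 0 = 1)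
    (horder : ∀ i : ℕ, i ≤ n + 2 * k →
      (PowerSeries.coeff i)
        ((Q : PowerSeries ℂ) * PowerSeries.mk γ - (P : PowerSeries ℂ)) = 0)
    (z : ℂ) (hQz : Q.eval z ≠ 0)
    (sm : ℕ → ℂ) (hsm : ∀ m : ℕ, sm m = ∑ i ∈ Finset.range (m + 1), γ i * z ^ i)
    (hnz : ∀ m i : ℕ, m < 2 * k → n ≤ i → i + m + 1 ≤ n + 2 * k →
      wynnEpsC sm (m + 1) (i + 1) - wynnEpsC sm (m + 1) i ≠ 0) :
    wynnEpsC sm (2 * k + 1) n = P.eval z / Q.eval z := by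
  exact WynnPade.wynnEps_eq_pade' γ n k P Q hP hQ hQ0 horder z hQz sm hsm hnz
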